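/- Let d ≥ 2 be an integer, ℓ a natural number, γ > 0 and M > 0. There exists a constant β > 0, depending only on d, ℓ, γ, M, such that for all real r′ > 0 and all a ∈ (0,1] one has ∫_{a r′}^{2 r′} e^{(d−1)s} · exp(−γ s e^{(d−1)s/2}) · (γ s e^{(d−1)s/2})^ℓ / ℓ! ds ≤ β · (a r′)^{−(M+2)} · exp( −(d−1) M a r′ / 2 ). -/

import Mathlib

open Real

theorem stmt_10 (d : ℕ) (hd : 2 ≤ d) (ℓ : ℕ) (γ M : ℝ) (hγ : 0 < γ) (hM : 0 < M) :
    ∃ β : ℝ, 0 < β ∧ ∀ r' a : ℝ, 0 < r' → 0 < a → a ≤ 1 →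
      (∫ s in (a * r')..(2 * r'),
          Real.exp (((d : ℝ) - 1) * s) *
            Real.exp (-(γ * s * Real.exp (((d : ℝ) - 1) * s / 2))) *
            (γ * s * Real.exp (((d : ℝ) - 1) * s / 2)) ^ ℓ / (ℓ.factorial : ℝ))
        ≤ β * (a * r') ^ (-(M + 2)) * Real.exp (-((d : ℝ) - 1) * M * a * r' / 2) := by
  have hd1 : (1 : ℝ) ≤ (d : ℝ) - 1 := by
    have : (2 : ℝ) ≤ (d : ℝ) := by exact_mod_cast hd
    linarith
  set c : ℝ := ((d : ℝ) - 1) * M / 2 with hc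
  have hcpos : 0 < c := by
    have : (0 : ℝ) < (d : ℝ) - 1 := by linarith
    positivity
  set n : ℕ := ℓ + ⌈M + 2⌉₊ with hn
  set K : ℝ := (n.factorial : ℝ) * γ ^ (-(M + 2)) with hK
  have hKpos : 0 < K := by
    have : (0 : ℝ) < (n.factorial : ℝ) := by exact_mod_cast n.factorial_pos
    positivity
  refine ⟨K / c, by positivity, ?_⟩
  intro r' a hr ha ha1
  have hab : a * r' ≤ 2 * r' := by nlinarith
  have har : 0 < a * r' := by positivity
  -- pointwise bound on the integrand
  have key : ∀ s ∈ Set.Icc (a * r') (2 * r'),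
      Real.exp (((d : ℝ) - 1) * s) *
          Real.exp (-(γ * s * Real.exp (((d : ℝ) - 1) * s / 2))) *
          (γ * s * Real.exp (((d : ℝ) - 1) * s / 2)) ^ ℓ / (ℓ.factorial : ℝ)
        ≤ K * (a * r') ^ (-(M + 2)) * Real.exp (-(c * s)) := by
    intro s hs
    have hspos : 0 < s := lt_of_lt_of_le har hs.1
    set x : ℝ := γ * s * Real.exp (((d : ℝ) - 1) * s / 2) with hx
    have hxpos : 0 < x := by positivity
    -- step 1: exp(-x) * x^ℓ ≤ n! * x^(-(M+2))
    have step1 : Real.exp (-x) * x ^ ℓ ≤ (n.factorial : ℝ) * x ^ (-(M + 2)) := by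
      rw [Real.exp_neg, Real.rpow_neg hxpos.le, mul_comm (Real.exp x)⁻¹,
        ← div_eq_mul_inv, ← div_eq_mul_inv,
        div_le_div_iff₀ (Real.exp_pos x) (Real.rpow_pos_of_pos hxpos _)]
      -- x^ℓ * x^(M+2) ≤ n! * exp x
      have hcomb : x ^ ((ℓ : ℝ) + (M + 2)) = x ^ ℓ * x ^ (M + 2) := by
        rw [Real.rpow_add hxpos, Real.rpow_natCast]
      rw [← hcomb]
      rcases le_or_gt x 1 with hx1 | hx1
      · have h1 : x ^ ((ℓ : ℝ) + (M + 2)) ≤ 1 :=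
          Real.rpow_le_one hxpos.le hx1 (by positivity)
        have h2 : (1 : ℝ) ≤ (n.factorial : ℝ) * Real.exp x := by
          have : (1 : ℝ) ≤ (n.factorial : ℝ) := by exact_mod_cast n.factorial_pos
          nlinarith [Real.one_le_exp hxpos.le]
        linarith
      · have hle : ((ℓ : ℝ) + (M + 2)) ≤ (n : ℝ) := by
          have := Nat.le_ceil (M + 2)
          simp only [hn, Nat.cast_add]
          linarith
        have h1 : x ^ ((ℓ : ℝ) + (M + 2)) ≤ x ^ (n : ℝ) :=
          Real.rpow_le_rpow_of_exponent_le hx1.le hle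
        rw [Real.rpow_natCast] at h1
        have h2 : x ^ n ≤ (n.factorial : ℝ) * Real.exp x := by
          have := Real.pow_div_factorial_le_exp (x := x) hxpos.le n
          have hfac : (0 : ℝ) < (n.factorial : ℝ) := by exact_mod_cast n.factorial_pos
          rw [div_le_iff₀ hfac] at this
          linarith [this]
        linarith
    -- step 2: expand x ^ (-(M+2))
    have step2 : x ^ (-(M + 2)) =
        γ ^ (-(M + 2)) * s ^ (-(M + 2)) *
          Real.exp ((((d : ℝ) - 1) * s / 2) * (-(M + 2))) := by
      rw [hx, Real.mul_rpow (by positivity) (Real.exp_pos _).le,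
        Real.mul_rpow hγ.le hspos.le,
        Real.rpow_def_of_pos (Real.exp_pos _), Real.log_exp]
    have hs_pow : s ^ (-(M + 2)) ≤ (a * r') ^ (-(M + 2)) :=
      Real.rpow_le_rpow_of_nonpos har hs.1 (by linarith)
    have hexp_comb : Real.exp (((d : ℝ) - 1) * s) *
        Real.exp ((((d : ℝ) - 1) * s / 2) * (-(M + 2))) = Real.exp (-(c * s)) := by
      rw [← Real.exp_add]
      congr 1
      rw [hc]; ring
    have hfac1 : (1 : ℝ) ≤ (ℓ.factorial : ℝ) := by exact_mod_cast ℓ.factorial_pos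
    calc Real.exp (((d : ℝ) - 1) * s) * Real.exp (-x) * x ^ ℓ / (ℓ.factorial : ℝ)
        ≤ Real.exp (((d : ℝ) - 1) * s) * (Real.exp (-x) * x ^ ℓ) := by
          rw [div_le_iff₀ (by positivity)]
          have h := mul_le_mul_of_nonneg_left (le_refl (Real.exp (-x) * x ^ ℓ))
            (Real.exp_pos (((d : ℝ) - 1) * s)).le
          nlinarith [mul_pos (Real.exp_pos (((d : ℝ) - 1) * s))
            (mul_pos (Real.exp_pos (-x)) (pow_pos hxpos ℓ)),
            mul_pos (Real.exp_pos (((d : ℝ) - 1) * s)) (Real.exp_pos (-x))]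
      _ ≤ Real.exp (((d : ℝ) - 1) * s) * ((n.factorial : ℝ) * x ^ (-(M + 2))) := by
          apply mul_le_mul_of_nonneg_left step1 (Real.exp_pos _).le
      _ = (n.factorial : ℝ) * γ ^ (-(M + 2)) * s ^ (-(M + 2)) * Real.exp (-(c * s)) := by
          rw [step2, ← hexp_comb]; ring
      _ ≤ K * (a * r') ^ (-(M + 2)) * Real.exp (-(c * s)) := by
          rw [hK]
          apply mul_le_mul_of_nonneg_right _ (Real.exp_pos _).le
          apply mul_le_mul_of_nonneg_left hs_pow
          have hfacn : (0 : ℝ) < (n.factorial : ℝ) := by exact_mod_cast n.factorial_pos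
          positivity
  -- integrability
  have hcontf : Continuous fun s : ℝ =>
      Real.exp (((d : ℝ) - 1) * s) *
        Real.exp (-(γ * s * Real.exp (((d : ℝ) - 1) * s / 2))) *
        (γ * s * Real.exp (((d : ℝ) - 1) * s / 2)) ^ ℓ / (ℓ.factorial : ℝ) := by
    fun_prop
  have hcontg : Continuous fun s : ℝ =>
      K * (a * r') ^ (-(M + 2)) * Real.exp (-(c * s)) := by fun_prop
  have hmono := intervalIntegral.integral_mono_on (μ := MeasureTheory.volume) hab
    (hcontf.intervalIntegrable _ _) (hcontg.intervalIntegrable _ _) key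
  -- compute the integral of the bounding function
  have hF : ∀ s ∈ Set.uIcc (a * r') (2 * r'),
      HasDerivAt (fun u : ℝ => -Real.exp (-(c * u)) / c) (Real.exp (-(c * s))) s := by
    intro s _
    have h1 : HasDerivAt (fun u : ℝ => -(c * u)) (-c) s := by
      simpa using (hasDerivAt_id s).const_mul (-c)
    have h2 := h1.exp
    have h3 := h2.const_mul (-c⁻¹)
    have hc0 : c ≠ 0 := hcpos.ne'
    have e1 : (fun u : ℝ => -Real.exp (-(c * u)) / c) = fun y => -c⁻¹ * Real.exp (-(c * y)) := by
      funext u; ring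
    have e2 : Real.exp (-(c * s)) = -c⁻¹ * (Real.exp (-(c * s)) * -c) := by
      rw [show -c⁻¹ * (Real.exp (-(c * s)) * -c) = Real.exp (-(c * s)) * (c⁻¹ * c) by ring,
        inv_mul_cancel₀ hc0, mul_one]
    rw [e1, e2]
    exact h3
  have hint : (∫ s in (a * r')..(2 * r'), Real.exp (-(c * s)))
      = -Real.exp (-(c * (2 * r'))) / c - (-Real.exp (-(c * (a * r'))) / c) :=
    intervalIntegral.integral_eq_sub_of_hasDerivAt hF
      ((Continuous.intervalIntegrable (by fun_prop) _ _))
  have hgint : (∫ s in (a * r')..(2 * r'), K * (a * r') ^ (-(M + 2)) * Real.exp (-(c * s)))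
      = K * (a * r') ^ (-(M + 2)) *
        (-Real.exp (-(c * (2 * r'))) / c - (-Real.exp (-(c * (a * r'))) / c)) := by
    rw [intervalIntegral.integral_const_mul, hint]
  have hbound : K * (a * r') ^ (-(M + 2)) *
      (-Real.exp (-(c * (2 * r'))) / c - (-Real.exp (-(c * (a * r'))) / c))
      ≤ K / c * (a * r') ^ (-(M + 2)) * Real.exp (-(c * (a * r'))) := by
    have h1 : -Real.exp (-(c * (2 * r'))) / c - (-Real.exp (-(c * (a * r'))) / c)
        ≤ Real.exp (-(c * (a * r'))) / c := by
      have := (Real.exp_pos (-(c * (2 * r')))).le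
      have hcc := hcpos
      rw [div_sub_div_same, div_le_div_iff₀ hcpos hcpos]
      nlinarith [Real.exp_pos (-(c * (2 * r')))]
    calc K * (a * r') ^ (-(M + 2)) *
        (-Real.exp (-(c * (2 * r'))) / c - (-Real.exp (-(c * (a * r'))) / c))
        ≤ K * (a * r') ^ (-(M + 2)) * (Real.exp (-(c * (a * r'))) / c) := by
          apply mul_le_mul_of_nonneg_left h1
          have := Real.rpow_pos_of_pos har (-(M + 2))
          positivity
      _ = K / c * (a * r') ^ (-(M + 2)) * Real.exp (-(c * (a * r'))) := by ring
  have hexp_eq : Real.exp (-(c * (a * r'))) = Real.exp (-((d : ℝ) - 1) * M * a * r' / 2) := by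
    congr 1
    rw [hc]; ring
  calc (∫ s in (a * r')..(2 * r'),
      Real.exp (((d : ℝ) - 1) * s) *
        Real.exp (-(γ * s * Real.exp (((d : ℝ) - 1) * s / 2))) *
        (γ * s * Real.exp (((d : ℝ) - 1) * s / 2)) ^ ℓ / (ℓ.factorial : ℝ))
      ≤ ∫ s in (a * r')..(2 * r'), K * (a * r') ^ (-(M + 2)) * Real.exp (-(c * s)) := hmono
    _ = K * (a * r') ^ (-(M + 2)) *
        (-Real.exp (-(c * (2 * r'))) / c - (-Real.exp (-(c * (a * r'))) / c)) := hgint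
    _ ≤ K / c * (a * r') ^ (-(M + 2)) * Real.exp (-(c * (a * r'))) := hbound
    _ = K / c * (a * r') ^ (-(M + 2)) * Real.exp (-((d : ℝ) - 1) * M * a * r' / 2) := by
        rw [hexp_eq]
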